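/- Let m > 0, N ≥ 2 an integer, and k ∈ ℝ with k ≠ 0. If l ≥ 1 is an odd integer then S_{l+2}(k) ≥ S_l(k); if l ≥ 0 is an even integer then S_{l+2}(k) ≤ S_l(k). -/

import Mathlib

/-- Legendre polynomial of degree `l` via Rodrigues' formula. -/
noncomputable def legendreP (l : ℕ) (y : ℝ) : ℝ :=
  (1 / (2 ^ l * (Nat.factorial l : ℝ))) * iteratedDeriv l (fun t : ℝ => (t ^ 2 - 1) ^ l) y

/-- The function `S_l(k)` for `k ≠ 0`. -/
noncomputable def Sl (m : ℝ) (N l : ℕ) (k : ℝ) : ℝ :=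
  2 * Real.pi ^ 2 * ((N : ℝ) - 1) *
    ∫ y in (-1 : ℝ)..(1 : ℝ),
      legendreP l y * Real.sinh (k * Real.arccos (y / (m + 1))) /
        (Real.sin (Real.arccos (y / (m + 1))) * Real.sinh (Real.pi * k))

open Real Set intervalIntegral ContDiff

section Toolkit
variable {s : Set ℝ} {F G : ℝ → ℝ}

lemma iter_contDiffOn (hs : IsOpen s) : ∀ (n : ℕ) (F : ℝ → ℝ), ContDiffOn ℝ ∞ F s →
    ContDiffOn ℝ ∞ (iteratedDeriv n F) s
  | 0, F, hF => by simpa [iteratedDeriv_zero] using hF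
  | (n+1), F, hF => by
      rw [iteratedDeriv_succ']
      exact iter_contDiffOn hs n _ (hF.deriv_of_isOpen hs (le_of_eq (rfl : (∞ + 1 : WithTop ℕ∞) = ∞)))

lemma iter_hasDerivAt (hs : IsOpen s) (hF : ContDiffOn ℝ ∞ F s) (n : ℕ) {x : ℝ} (hx : x ∈ s) :
    HasDerivAt (iteratedDeriv n F) (iteratedDeriv (n + 1) F x) x := by
  have h1 : DifferentiableAt ℝ (iteratedDeriv n F) x := by
    have := (iter_contDiffOn hs n F hF).contDiffAt (hs.mem_nhds hx)
    exact this.differentiableAt (by simp)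
  simpa [iteratedDeriv_succ] using h1.hasDerivAt
end Toolkit

lemma iteratedDeriv_add_on {s : Set ℝ} {F G : ℝ → ℝ} (hs : IsOpen s)
    (hF : ContDiffOn ℝ ∞ F s) (hG : ContDiffOn ℝ ∞ G s)
    (a b : ℝ) (n : ℕ) : ∀ x ∈ s,
    iteratedDeriv n (fun y => a * F y + b * G y) x
      = a * iteratedDeriv n F x + b * iteratedDeriv n G x := by
  induction n with
  | zero => intro x _; simp [iteratedDeriv_zero]
  | succ n ih =>
      intro x hx
      have hEq : Set.EqOn (iteratedDeriv n (fun y => a * F y + b * G y))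
          (fun y => a * iteratedDeriv n F y + b * iteratedDeriv n G y) s := fun y hy => ih y hy
      rw [iteratedDeriv_succ]
      have h1 : deriv (iteratedDeriv n (fun y => a * F y + b * G y)) x
          = deriv (fun y => a * iteratedDeriv n F y + b * iteratedDeriv n G y) x := by
        apply Filter.EventuallyEq.deriv_eq
        exact Filter.eventuallyEq_of_mem (hs.mem_nhds hx) hEq
      rw [h1]
      have h2 : HasDerivAt (fun y => a * iteratedDeriv n F y + b * iteratedDeriv n G y)
          (a * iteratedDeriv (n+1) F x + b * iteratedDeriv (n+1) G x) x :=
        ((iter_hasDerivAt hs hF n hx).const_mul a).add ((iter_hasDerivAt hs hG n hx).const_mul b)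
      rw [h2.deriv, iteratedDeriv_succ, iteratedDeriv_succ]

section AbsMono

lemma absMono {c b : ℝ} (hc : 0 < c) (hb : 0 ≤ b) {F : ℝ → ℝ}
    (hF : ContDiffOn ℝ ∞ F (Ioo (-c) c))
    (hODE : ∀ x ∈ Ioo (-c) c,
      (c^2 - x^2) * iteratedDeriv 2 F x = 3 * x * iteratedDeriv 1 F x + b * F x)
    (h0 : ∀ x ∈ Ico 0 c, 0 ≤ F x)
    (h1 : ∀ x ∈ Ico 0 c, 0 ≤ iteratedDeriv 1 F x) :
    ∀ (n : ℕ), ∀ x ∈ Ico 0 c, 0 ≤ iteratedDeriv n F x := by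
  have hopen : IsOpen (Ioo (-c:ℝ) c) := isOpen_Ioo
  have hsub : Ico (0:ℝ) c ⊆ Ioo (-c) c := fun x hx => ⟨lt_of_lt_of_le (by linarith) hx.1, hx.2⟩
  have hODEn : ∀ (n : ℕ), ∀ x ∈ Ioo (-c) c,
      (c^2 - x^2) * iteratedDeriv (n+2) F x
        = (2*(n:ℝ)+3) * x * iteratedDeriv (n+1) F x
          + ((n:ℝ)*((n:ℝ)+2)+b) * iteratedDeriv n F x := by
    intro n
    induction n with
    | zero => intro x hx; simpa using hODE x hx
    | succ n ih =>
        intro x hx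
        have hder : deriv (fun y => (c^2 - y^2) * iteratedDeriv (n+2) F y) x
            = deriv (fun y => (2*(n:ℝ)+3) * y * iteratedDeriv (n+1) F y
                + ((n:ℝ)*((n:ℝ)+2)+b) * iteratedDeriv n F y) x :=
          Filter.EventuallyEq.deriv_eq
            (Filter.eventuallyEq_of_mem (hopen.mem_nhds hx) (fun y hy => ih y hy))
        have d0 : HasDerivAt (fun y : ℝ => c^2 - y^2) (-(2*x)) x := by
          simpa using ((hasDerivAt_pow 2 x).const_sub (c^2))
        have dL : HasDerivAt (fun y => (c^2 - y^2) * iteratedDeriv (n+2) F y)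
            ((-(2*x)) * iteratedDeriv (n+2) F x + (c^2-x^2) * iteratedDeriv (n+3) F x) x :=
          d0.mul (iter_hasDerivAt hopen hF (n+2) hx)
        have dR : HasDerivAt (fun y => (2*(n:ℝ)+3) * y * iteratedDeriv (n+1) F y
                + ((n:ℝ)*((n:ℝ)+2)+b) * iteratedDeriv n F y)
            (((2*(n:ℝ)+3) * 1 * iteratedDeriv (n+1) F x
                + ((2*(n:ℝ)+3) * x) * iteratedDeriv (n+2) F x)
              + ((n:ℝ)*((n:ℝ)+2)+b) * iteratedDeriv (n+1) F x) x := by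
          have dA : HasDerivAt (fun y : ℝ => (2*(n:ℝ)+3) * y) ((2*(n:ℝ)+3) * 1) x :=
            (hasDerivAt_id x).const_mul _
          exact (dA.mul (iter_hasDerivAt hopen hF (n+1) hx)).add
            ((iter_hasDerivAt hopen hF n hx).const_mul _)
        have heq := hder
        rw [dL.deriv, dR.deriv] at heq
        push_cast
        push_cast at heq
        linear_combination heq
  have key : ∀ n : ℕ, (∀ x ∈ Ico 0 c, 0 ≤ iteratedDeriv n F x)
      ∧ (∀ x ∈ Ico 0 c, 0 ≤ iteratedDeriv (n+1) F x) := by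
    intro n
    induction n with
    | zero => exact ⟨by simpa [iteratedDeriv_zero] using h0, h1⟩
    | succ n ih =>
        refine ⟨ih.2, fun x hx => ?_⟩
        have hODE' := hODEn n x (hsub hx)
        have hpos : 0 < c^2 - x^2 := by nlinarith [hx.1, hx.2]
        have hnum : 0 ≤ (2*(n:ℝ)+3) * x * iteratedDeriv (n+1) F x
            + ((n:ℝ)*((n:ℝ)+2)+b) * iteratedDeriv n F x := by
          have t1 : 0 ≤ (2*(n:ℝ)+3) * x := mul_nonneg (by positivity) hx.1
          exact add_nonneg (mul_nonneg t1 (ih.2 x hx))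
            (mul_nonneg (by positivity) (ih.1 x hx))
        have hgoal : 0 ≤ iteratedDeriv (n+2) F x := by nlinarith [hODE', hnum, hpos]
        simpa [show n+1+1 = n+2 from rfl] using hgoal
  exact fun n => (key n).1

end AbsMono


noncomputable def UU (k c y : ℝ) : ℝ := Real.cosh (k * Real.arcsin (y/c))
noncomputable def VV (k c y : ℝ) : ℝ := Real.sinh (k * Real.arcsin (y/c))
noncomputable def RRf (c y : ℝ) : ℝ := (Real.sqrt (1 - (y/c)^2))⁻¹
noncomputable def Ec (k c : ℝ) : ℝ → ℝ := fun y => UU k c y * RRf c y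
noncomputable def Oc (k c : ℝ) : ℝ → ℝ := fun y => VV k c y * RRf c y
noncomputable def D1 (k c : ℝ) (A B : ℝ → ℝ) : ℝ → ℝ :=
  fun y => k/c * (B y * RRf c y ^ 2) + 1/c^2 * (y * (A y * RRf c y ^ 3))
noncomputable def D2 (k c : ℝ) (A B : ℝ → ℝ) : ℝ → ℝ :=
  fun y => (k^2+1)/c^2 * (A y * RRf c y ^ 3) + 3*k/c^3 * (y * (B y * RRf c y ^ 4))
    + 3/c^4 * (y^2 * (A y * RRf c y ^ 5))

section Derivs
variable {k c x : ℝ}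

lemma mem_unit (hc : 0 < c) (hx : x ∈ Ioo (-c) c) : -1 < x/c ∧ x/c < 1 := by
  obtain ⟨h1, h2⟩ := hx
  constructor
  · rw [lt_div_iff₀ hc]; linarith
  · rw [div_lt_iff₀ hc]; linarith

lemma sqrt_pos' (hc : 0 < c) (hx : x ∈ Ioo (-c) c) : 0 < Real.sqrt (1 - (x/c)^2) := by
  obtain ⟨h1, h2⟩ := mem_unit hc hx
  exact Real.sqrt_pos.mpr (by nlinarith)

lemma hasDerivAt_RRf (hc : 0 < c) (hx : x ∈ Ioo (-c) c) :
    HasDerivAt (RRf c) (x/c^2 * RRf c x ^ 3) x := by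
  obtain ⟨h1, h2⟩ := mem_unit hc hx
  have hq : (0:ℝ) < 1 - (x/c)^2 := by nlinarith
  have hS := sqrt_pos' hc hx
  have hinner : HasDerivAt (fun y : ℝ => 1 - (y/c)^2) (-(2*(x/c)*(1/c))) x := by
    have : HasDerivAt (fun y : ℝ => (y/c)^2) (2*(x/c)^(2-1)*(1/c)) x :=
      ((hasDerivAt_id x).div_const c).pow 2
    simpa using this.const_sub 1
  have hsq : HasDerivAt (fun y : ℝ => Real.sqrt (1 - (y/c)^2))
      (1/(2*Real.sqrt (1 - (x/c)^2)) * (-(2*(x/c)*(1/c)))) x :=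
    (Real.hasDerivAt_sqrt hq.ne').comp x hinner
  have := hsq.inv hS.ne'
  refine this.congr_deriv (Eq.symm ?_)
  simp only [RRf]
  rw [inv_pow]
  field_simp

lemma hasDerivAt_arcsin_div (hc : 0 < c) (hx : x ∈ Ioo (-c) c) :
    HasDerivAt (fun y : ℝ => Real.arcsin (y/c)) (1/c * RRf c x) x := by
  obtain ⟨h1, h2⟩ := mem_unit hc hx
  have := (Real.hasDerivAt_arcsin h1.ne' h2.ne).comp x ((hasDerivAt_id x).div_const c)
  refine this.congr_deriv (Eq.symm ?_)
  simp only [RRf, one_div]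
  rw [mul_comm]

lemma hasDerivAt_UU (hc : 0 < c) (hx : x ∈ Ioo (-c) c) :
    HasDerivAt (UU k c) (k/c * (VV k c x * RRf c x)) x := by
  have := ((hasDerivAt_arcsin_div hc hx).const_mul k).cosh
  refine this.congr_deriv (Eq.symm ?_)
  simp only [VV]
  ring

lemma hasDerivAt_VV (hc : 0 < c) (hx : x ∈ Ioo (-c) c) :
    HasDerivAt (VV k c) (k/c * (UU k c x * RRf c x)) x := by
  have := ((hasDerivAt_arcsin_div hc hx).const_mul k).sinh
  refine this.congr_deriv (Eq.symm ?_)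
  simp only [UU]
  ring

lemma hasDerivAt_pair1 {A B : ℝ → ℝ}
    (hA : HasDerivAt A (k/c * (B x * RRf c x)) x)
    (hR : HasDerivAt (RRf c) (x/c^2 * RRf c x ^ 3) x) :
    HasDerivAt (fun y => A y * RRf c y) (D1 k c A B x) x := by
  refine (hA.mul hR).congr_deriv (Eq.symm ?_)
  simp only [D1]
  ring

lemma hasDerivAt_pair2 {A B : ℝ → ℝ}
    (hA : HasDerivAt A (k/c * (B x * RRf c x)) x)
    (hB : HasDerivAt B (k/c * (A x * RRf c x)) x)
    (hR : HasDerivAt (RRf c) (x/c^2 * RRf c x ^ 3) x) :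
    HasDerivAt (D1 k c A B) (D2 k c A B x) x := by
  have hR2 : HasDerivAt (fun y => RRf c y ^ 2) (2 * RRf c x ^ (2-1) * (x/c^2 * RRf c x ^ 3)) x :=
    hR.pow 2
  have hR3 : HasDerivAt (fun y => RRf c y ^ 3) (3 * RRf c x ^ (3-1) * (x/c^2 * RRf c x ^ 3)) x :=
    hR.pow 3
  have t1 : HasDerivAt (fun y => k/c * (B y * RRf c y ^ 2))
      ((k/c) * ((k/c * (A x * RRf c x)) * RRf c x ^ 2
        + B x * (2 * RRf c x ^ (2-1) * (x/c^2 * RRf c x ^ 3)))) x :=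
    (hB.mul hR2).const_mul (k/c)
  have t2 : HasDerivAt (fun y => 1/c^2 * (y * (A y * RRf c y ^ 3)))
      ((1/c^2) * (1 * (A x * RRf c x ^ 3)
        + x * ((k/c * (B x * RRf c x)) * RRf c x ^ 3
          + A x * (3 * RRf c x ^ (3-1) * (x/c^2 * RRf c x ^ 3))))) x :=
    (((hasDerivAt_id x).mul (hA.mul hR3))).const_mul (1/c^2)
  refine (t1.add t2).congr_deriv (Eq.symm ?_)
  simp only [D2]
  ring

lemma ode_pair (hc : 0 < c) (hx : x ∈ Ioo (-c) c) (A B : ℝ → ℝ) :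
    (c^2 - x^2) * D2 k c A B x = 3 * x * D1 k c A B x + (1 + k^2) * (A x * RRf c x) := by
  obtain ⟨h1, h2⟩ := mem_unit hc hx
  have hq : (0:ℝ) < 1 - (x/c)^2 := by nlinarith
  have hS := sqrt_pos' hc hx
  have hS2 : (Real.sqrt (1 - (x/c)^2))^2 = 1 - (x/c)^2 := Real.sq_sqrt hq.le
  simp only [D1, D2, RRf]
  set S := Real.sqrt (1 - (x/c)^2) with hSdef
  have i2 : (S⁻¹)^2 = (1 - (x/c)^2)⁻¹ := by rw [inv_pow, hS2]
  have i3 : (S⁻¹)^3 = (1 - (x/c)^2)⁻¹ * S⁻¹ := by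
    rw [pow_succ, i2]
  have i4 : (S⁻¹)^4 = ((1 - (x/c)^2)⁻¹)^2 := by
    rw [show (4:ℕ) = 2*2 from rfl, pow_mul, i2]
  have i5 : (S⁻¹)^5 = ((1 - (x/c)^2)⁻¹)^2 * S⁻¹ := by
    rw [pow_succ, i4]
  have hcne : c ≠ 0 := hc.ne'
  have hw : c^2 - x^2 ≠ 0 := by nlinarith [hx.1, hx.2]
  have hq1 : 1 - (x/c)^2 = (c^2 - x^2)/c^2 := by field_simp
  rw [i2, i3, i4, i5, hq1]
  field_simp
  ring

end Derivs

section Smooth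
variable {k c x : ℝ}

lemma contDiffAt_RRf (hc : 0 < c) (hx : x ∈ Ioo (-c) c) : ContDiffAt ℝ ∞ (RRf c) x := by
  obtain ⟨h1, h2⟩ := mem_unit hc hx
  have hq : (0:ℝ) < 1 - (x/c)^2 := by nlinarith
  have hS := sqrt_pos' hc hx
  have hdiv : ContDiffAt ℝ ∞ (fun y : ℝ => y/c) x := contDiffAt_id.div_const _
  have hinner : ContDiffAt ℝ ∞ (fun y : ℝ => 1 - (y/c)^2) x :=
    contDiffAt_const.sub (hdiv.pow 2)
  exact ((Real.contDiffAt_sqrt hq.ne').comp x hinner).inv hS.ne'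

lemma contDiffAt_UU (hc : 0 < c) (hx : x ∈ Ioo (-c) c) : ContDiffAt ℝ ∞ (UU k c) x := by
  obtain ⟨h1, h2⟩ := mem_unit hc hx
  have hdiv : ContDiffAt ℝ ∞ (fun y : ℝ => y/c) x := contDiffAt_id.div_const _
  have harc : ContDiffAt ℝ ∞ (fun y : ℝ => Real.arcsin (y/c)) x :=
    ContDiffAt.comp (g := Real.arcsin) x (Real.contDiffAt_arcsin h1.ne' h2.ne) hdiv
  exact Real.contDiff_cosh.contDiffAt.comp x (contDiffAt_const.mul harc)

lemma contDiffAt_VV (hc : 0 < c) (hx : x ∈ Ioo (-c) c) : ContDiffAt ℝ ∞ (VV k c) x := by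
  obtain ⟨h1, h2⟩ := mem_unit hc hx
  have hdiv : ContDiffAt ℝ ∞ (fun y : ℝ => y/c) x := contDiffAt_id.div_const _
  have harc : ContDiffAt ℝ ∞ (fun y : ℝ => Real.arcsin (y/c)) x :=
    ContDiffAt.comp (g := Real.arcsin) x (Real.contDiffAt_arcsin h1.ne' h2.ne) hdiv
  exact Real.contDiff_sinh.contDiffAt.comp x (contDiffAt_const.mul harc)

lemma contDiffOn_Ec (hc : 0 < c) : ContDiffOn ℝ ∞ (Ec k c) (Ioo (-c) c) :=
  fun x hx => ((contDiffAt_UU hc hx).mul (contDiffAt_RRf hc hx)).contDiffWithinAt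

lemma contDiffOn_Oc (hc : 0 < c) : ContDiffOn ℝ ∞ (Oc k c) (Ioo (-c) c) :=
  fun x hx => ((contDiffAt_VV hc hx).mul (contDiffAt_RRf hc hx)).contDiffWithinAt

end Smooth

section Iter12
variable {s : Set ℝ} {F F1 F2 : ℝ → ℝ} {x : ℝ}

lemma iter_one_two (hs : IsOpen s)
    (hd1 : ∀ x ∈ s, HasDerivAt F (F1 x) x)
    (hd2 : ∀ x ∈ s, HasDerivAt F1 (F2 x) x) (hx : x ∈ s) :
    iteratedDeriv 1 F x = F1 x ∧ iteratedDeriv 2 F x = F2 x := by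
  constructor
  · rw [iteratedDeriv_one]; exact (hd1 x hx).deriv
  · rw [iteratedDeriv_succ, iteratedDeriv_one]
    have h1 : deriv (deriv F) x = deriv F1 x := by
      apply Filter.EventuallyEq.deriv_eq
      apply Filter.eventuallyEq_of_mem (hs.mem_nhds hx)
      exact fun y hy => (hd1 y hy).deriv
    rw [h1]; exact (hd2 x hx).deriv

end Iter12

section Main1
variable {k c : ℝ}

lemma pair_derivs (hc : 0 < c) {A B : ℝ → ℝ}
    (hA : ∀ x ∈ Ioo (-c) c, HasDerivAt A (k/c * (B x * RRf c x)) x)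
    (hB : ∀ x ∈ Ioo (-c) c, HasDerivAt B (k/c * (A x * RRf c x)) x) :
    ∀ x ∈ Ioo (-c) c,
      iteratedDeriv 1 (fun y => A y * RRf c y) x = D1 k c A B x ∧
      iteratedDeriv 2 (fun y => A y * RRf c y) x = D2 k c A B x := by
  intro x hx
  exact iter_one_two isOpen_Ioo
    (fun y hy => hasDerivAt_pair1 (hA y hy) (hasDerivAt_RRf hc hy))
    (fun y hy => hasDerivAt_pair2 (hA y hy) (hB y hy) (hasDerivAt_RRf hc hy)) hx

lemma ode_iter (hc : 0 < c) {A B : ℝ → ℝ}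
    (hA : ∀ x ∈ Ioo (-c) c, HasDerivAt A (k/c * (B x * RRf c x)) x)
    (hB : ∀ x ∈ Ioo (-c) c, HasDerivAt B (k/c * (A x * RRf c x)) x) :
    ∀ x ∈ Ioo (-c) c,
      (c^2 - x^2) * iteratedDeriv 2 (fun y => A y * RRf c y) x
        = 3 * x * iteratedDeriv 1 (fun y => A y * RRf c y) x
          + (1 + k^2) * (fun y => A y * RRf c y) x := by
  intro x hx
  obtain ⟨e1, e2⟩ := pair_derivs hc hA hB x hx
  rw [e1, e2]
  exact ode_pair hc hx A B

lemma nonneg_iter_Ec (hk : 0 < k) (hc : 0 < c) :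
    ∀ (n : ℕ), ∀ x ∈ Ico 0 c, 0 ≤ iteratedDeriv n (Ec k c) x := by
  have hA : ∀ x ∈ Ioo (-c) c, HasDerivAt (UU k c) (k/c * (VV k c x * RRf c x)) x :=
    fun x hx => hasDerivAt_UU hc hx
  have hB : ∀ x ∈ Ioo (-c) c, HasDerivAt (VV k c) (k/c * (UU k c x * RRf c x)) x :=
    fun x hx => hasDerivAt_VV hc hx
  have hsub : Ico (0:ℝ) c ⊆ Ioo (-c) c := fun x hx => ⟨by linarith [hx.1], hx.2⟩
  have hVpos : ∀ x ∈ Ico (0:ℝ) c, 0 ≤ VV k c x := by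
    intro x hx
    exact Real.sinh_nonneg_iff.mpr (mul_nonneg hk.le
      (Real.arcsin_nonneg.mpr (div_nonneg hx.1 hc.le)))
  have hRpos : ∀ x : ℝ, 0 ≤ RRf c x := fun x => inv_nonneg.mpr (Real.sqrt_nonneg _)
  apply absMono hc (by positivity) (contDiffOn_Ec hc) (ode_iter hc hA hB)
  · intro x hx
    exact mul_nonneg (Real.cosh_pos _).le (hRpos x)
  · intro x hx
    have e1 : iteratedDeriv 1 (Ec k c) x = D1 k c (UU k c) (VV k c) x :=
      (pair_derivs hc hA hB x (hsub hx)).1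
    rw [e1]
    simp only [D1]
    have h1 : 0 ≤ k/c * (VV k c x * RRf c x ^ 2) :=
      mul_nonneg (div_nonneg hk.le hc.le)
        (mul_nonneg (hVpos x hx) (pow_nonneg (hRpos x) 2))
    have h2 : 0 ≤ 1/c^2 * (x * (UU k c x * RRf c x ^ 3)) := by
      apply mul_nonneg (by positivity)
      exact mul_nonneg hx.1 (mul_nonneg (Real.cosh_pos _).le (pow_nonneg (hRpos x) 3))
    linarith

lemma nonneg_iter_Oc (hk : 0 < k) (hc : 0 < c) :
    ∀ (n : ℕ), ∀ x ∈ Ico 0 c, 0 ≤ iteratedDeriv n (Oc k c) x := by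
  have hA : ∀ x ∈ Ioo (-c) c, HasDerivAt (VV k c) (k/c * (UU k c x * RRf c x)) x :=
    fun x hx => hasDerivAt_VV hc hx
  have hB : ∀ x ∈ Ioo (-c) c, HasDerivAt (UU k c) (k/c * (VV k c x * RRf c x)) x :=
    fun x hx => hasDerivAt_UU hc hx
  have hsub : Ico (0:ℝ) c ⊆ Ioo (-c) c := fun x hx => ⟨by linarith [hx.1], hx.2⟩
  have hVpos : ∀ x ∈ Ico (0:ℝ) c, 0 ≤ VV k c x := by
    intro x hx
    exact Real.sinh_nonneg_iff.mpr (mul_nonneg hk.le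
      (Real.arcsin_nonneg.mpr (div_nonneg hx.1 hc.le)))
  have hRpos : ∀ x : ℝ, 0 ≤ RRf c x := fun x => inv_nonneg.mpr (Real.sqrt_nonneg _)
  apply absMono hc (by positivity) (contDiffOn_Oc hc) (ode_iter hc hA hB)
  · intro x hx
    exact mul_nonneg (hVpos x hx) (hRpos x)
  · intro x hx
    have e1 : iteratedDeriv 1 (Oc k c) x = D1 k c (VV k c) (UU k c) x :=
      (pair_derivs hc hA hB x (hsub hx)).1
    rw [e1]
    simp only [D1]
    have h1 : 0 ≤ k/c * (UU k c x * RRf c x ^ 2) :=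
      mul_nonneg (div_nonneg hk.le hc.le)
        (mul_nonneg (Real.cosh_pos _).le (pow_nonneg (hRpos x) 2))
    have h2 : 0 ≤ 1/c^2 * (x * (VV k c x * RRf c x ^ 3)) := by
      apply mul_nonneg (by positivity)
      exact mul_nonneg hx.1 (mul_nonneg (hVpos x hx) (pow_nonneg (hRpos x) 3))
    linarith

lemma Ec_even (y : ℝ) : Ec k c (-y) = Ec k c y := by
  simp [Ec, UU, RRf, neg_div, Real.arcsin_neg, mul_neg, Real.cosh_neg, neg_sq]

lemma Oc_odd (y : ℝ) : Oc k c (-y) = -Oc k c y := by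
  simp [Oc, VV, RRf, neg_div, Real.arcsin_neg, mul_neg, Real.sinh_neg, neg_sq, neg_mul]

end Main1

section Rodrigues

noncomputable def qs (n : ℕ) : ℝ → ℝ := fun t : ℝ => (t ^ 2 - 1) ^ n

lemma contDiff_qs (n : ℕ) : ContDiff ℝ ∞ (qs n) := by
  exact ((contDiff_id.pow 2).sub contDiff_const).pow n

lemma qs_hasDerivAt (n i : ℕ) (x : ℝ) :
    HasDerivAt (iteratedDeriv i (qs n)) (iteratedDeriv (i+1) (qs n) x) x :=
  iter_hasDerivAt isOpen_univ (contDiff_qs n).contDiffOn i (mem_univ x)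

lemma qs_rep (n : ℕ) : ∀ i, i ≤ n → ∃ p : Polynomial ℝ,
    iteratedDeriv i (qs n) = fun y => (y^2-1)^(n-i) * Polynomial.eval y p := by
  intro i
  induction i with
  | zero =>
      intro _
      exact ⟨1, by funext y; simp [iteratedDeriv_zero, qs]⟩
  | succ i ih =>
      intro hi
      obtain ⟨p, hp⟩ := ih (by omega)
      have hni : n - i = (n - (i+1)) + 1 := by omega
      refine ⟨Polynomial.C (2*((n:ℝ)-(i:ℝ))) * Polynomial.X * p
        + (Polynomial.X^2 - 1) * Polynomial.derivative p, ?_⟩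
      funext y
      rw [iteratedDeriv_succ, hp]
      have hbase : HasDerivAt (fun y : ℝ => y^2 - 1) (2*y) y := by
        simpa using (hasDerivAt_pow 2 y).sub_const 1
      have hpow : HasDerivAt (fun y : ℝ => (y^2-1)^(n-i))
          ((n-i : ℕ) * (y^2-1)^((n-i)-1) * (2*y)) y := hbase.pow (n-i)
      have hmul : HasDerivAt (fun y : ℝ => (y^2-1)^(n-i) * Polynomial.eval y p)
          (((n-i : ℕ) * (y^2-1)^((n-i)-1) * (2*y)) * Polynomial.eval y p
            + (y^2-1)^(n-i) * Polynomial.eval y (Polynomial.derivative p)) y :=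
        hpow.mul (p.hasDerivAt y)
      rw [hmul.deriv]
      have h1 : ((n:ℕ) - i : ℕ) = ((n - (i+1) : ℕ) + 1 : ℕ) := hni
      rw [h1, Nat.add_sub_cancel]
      have hcast : (((n - (i+1) : ℕ) + 1 : ℕ) : ℝ) = (n:ℝ) - (i:ℝ) := by
        have : (n - (i+1) : ℕ) + 1 = n - i := by omega
        rw [this]
        have h2 : ((n - i : ℕ) : ℝ) = (n:ℝ) - (i:ℝ) := by
          push_cast [Nat.cast_sub (by omega : i ≤ n)]; ring
        exact h2
      rw [hcast]
      simp only [Polynomial.eval_add, Polynomial.eval_mul, Polynomial.eval_C,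
        Polynomial.eval_X, Polynomial.eval_sub, Polynomial.eval_pow, Polynomial.eval_one]
      rw [pow_succ]
      ring

lemma qs_boundary (n i : ℕ) (hi : i < n) :
    iteratedDeriv i (qs n) 1 = 0 ∧ iteratedDeriv i (qs n) (-1) = 0 := by
  obtain ⟨p, hp⟩ := qs_rep n i (by omega)
  have h0 : n - i ≠ 0 := by omega
  constructor <;> rw [hp] <;> norm_num [zero_pow h0]

lemma qs_continuous (n i : ℕ) (h : i ≤ n) : Continuous (iteratedDeriv i (qs n)) := by
  obtain ⟨p, hp⟩ := qs_rep n i h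
  rw [hp]
  exact (((continuous_pow 2).sub continuous_const).pow _).mul p.continuous

end Rodrigues

section Parts
open MeasureTheory

variable {c : ℝ} {G : ℝ → ℝ}

lemma Icc_sub_Ioo (hc : 1 < c) : Icc (-1:ℝ) 1 ⊆ Ioo (-c) c :=
  fun x hx => ⟨by linarith [hx.1], by linarith [hx.2]⟩

lemma G_hasDerivAt (hc : 1 < c) (hG : ContDiffOn ℝ ∞ G (Ioo (-c) c)) (j : ℕ) :
    ∀ x ∈ uIcc (-1:ℝ) 1, HasDerivAt (iteratedDeriv j G) (iteratedDeriv (j+1) G x) x := by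
  intro x hx
  rw [uIcc_of_le (by norm_num : (-1:ℝ) ≤ 1)] at hx
  exact iter_hasDerivAt isOpen_Ioo hG j (Icc_sub_Ioo hc hx)

lemma G_integrable (hc : 1 < c) (hG : ContDiffOn ℝ ∞ G (Ioo (-c) c)) (j : ℕ) :
    IntervalIntegrable (iteratedDeriv j G) volume (-1 : ℝ) 1 := by
  apply ContinuousOn.intervalIntegrable
  rw [uIcc_of_le (by norm_num : (-1:ℝ) ≤ 1)]
  exact ((iter_contDiffOn isOpen_Ioo j G hG).continuousOn).mono (Icc_sub_Ioo hc)

lemma parts_step (hc : 1 < c) (hG : ContDiffOn ℝ ∞ G (Ioo (-c) c))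
    (n i j : ℕ) (hi : i + 1 ≤ n) :
    ∫ y in (-1:ℝ)..1, iteratedDeriv (i+1) (qs n) y * iteratedDeriv j G y
      = - ∫ y in (-1:ℝ)..1, iteratedDeriv i (qs n) y * iteratedDeriv (j+1) G y := by
  have h := intervalIntegral.integral_mul_deriv_eq_deriv_mul
    (a := (-1:ℝ)) (b := (1:ℝ))
    (u := iteratedDeriv j G) (u' := iteratedDeriv (j+1) G)
    (v := iteratedDeriv i (qs n)) (v' := iteratedDeriv (i+1) (qs n))
    (G_hasDerivAt hc hG j) (fun x _ => qs_hasDerivAt n i x)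
    (G_integrable hc hG (j+1)) ((qs_continuous n (i+1) hi).intervalIntegrable _ _)
  obtain ⟨hb1, hb2⟩ := qs_boundary n i (by omega)
  rw [hb1, hb2] at h
  simp only [mul_zero, zero_sub] at h
  have e1 : ∫ y in (-1:ℝ)..1, iteratedDeriv (i+1) (qs n) y * iteratedDeriv j G y
      = ∫ y in (-1:ℝ)..1, iteratedDeriv j G y * iteratedDeriv (i+1) (qs n) y := by
    simp_rw [mul_comm]
  have e2 : ∫ y in (-1:ℝ)..1, iteratedDeriv i (qs n) y * iteratedDeriv (j+1) G y
      = ∫ y in (-1:ℝ)..1, iteratedDeriv (j+1) G y * iteratedDeriv i (qs n) y := by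
    simp_rw [mul_comm]
  rw [e1, e2]
  linarith [h]

lemma parts (hc : 1 < c) (hG : ContDiffOn ℝ ∞ G (Ioo (-c) c)) (n : ℕ) :
    ∀ j, j ≤ n →
    ∫ y in (-1:ℝ)..1, iteratedDeriv n (qs n) y * G y
      = (-1:ℝ)^j * ∫ y in (-1:ℝ)..1, iteratedDeriv (n-j) (qs n) y * iteratedDeriv j G y := by
  intro j
  induction j with
  | zero => intro _; simp [iteratedDeriv_zero]
  | succ j ih =>
      intro hj
      have e := ih (by omega)
      have hnj : n - j = (n - (j+1)) + 1 := by omega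
      rw [hnj] at e
      rw [parts_step hc hG n (n-(j+1)) j (by omega)] at e
      rw [e]
      ring

end Parts

section QS2

lemma qs_deriv_one (l : ℕ) :
    deriv (qs (l+2)) = fun y => ((l:ℝ)+2)*(y^2-1)^(l+1)*(2*y) := by
  funext y
  have hbase : HasDerivAt (fun y : ℝ => y^2-1) (2*y) y := by
    simpa using (hasDerivAt_pow 2 y).sub_const 1
  have h := hbase.pow (l+2)
  have h2 : HasDerivAt (qs (l+2)) (((l+2 : ℕ):ℝ) * (y^2-1)^(l+2-1) * (2*y)) y := h
  rw [h2.deriv]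
  push_cast
  norm_num

lemma qs_second (l : ℕ) :
    iteratedDeriv 2 (qs (l+2))
      = fun y => 2*((l:ℝ)+2)*(y^2-1)^(l+1) + 4*((l:ℝ)+2)*((l:ℝ)+1)*(y^2*(y^2-1)^l) := by
  rw [iteratedDeriv_succ, iteratedDeriv_one, qs_deriv_one]
  funext y
  have hbase : HasDerivAt (fun y : ℝ => y^2-1) (2*y) y := by
    simpa using (hasDerivAt_pow 2 y).sub_const 1
  have hA : HasDerivAt (fun y : ℝ => ((l:ℝ)+2)*(y^2-1)^(l+1))
      (((l:ℝ)+2) * (((l+1 : ℕ):ℝ) * (y^2-1)^(l+1-1) * (2*y))) y :=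
    (hbase.pow (l+1)).const_mul _
  have hB : HasDerivAt (fun y : ℝ => 2*y) (2*1) y := (hasDerivAt_id y).const_mul 2
  have hAB := hA.mul hB
  have hfun : (fun y : ℝ => ((l:ℝ)+2)*(y^2-1)^(l+1)*(2*y))
      = (fun y => (((l:ℝ)+2)*(y^2-1)^(l+1))) * (fun y => (2*y)) := rfl
  rw [hfun, hAB.deriv]
  push_cast
  norm_num
  ring

end QS2

noncomputable def aa (k : ℝ) : ℝ := Real.sinh (k*Real.pi/2)/Real.sinh (Real.pi*k)
noncomputable def bb (k : ℝ) : ℝ := -(Real.cosh (k*Real.pi/2)/Real.sinh (Real.pi*k))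
noncomputable def Gf (k c : ℝ) : ℝ → ℝ := fun y => aa k * Ec k c y + bb k * Oc k c y
noncomputable def wf (l : ℕ) : ℝ → ℝ :=
  fun y => (2*(l:ℝ)+3)/(2^(l+1)*(((l+1).factorial : ℕ):ℝ)) * (1-y^2)^(l+1)

section Final
open MeasureTheory
variable {k c : ℝ}

lemma aa_pos (hk : 0 < k) : 0 < aa k := by
  have h1 : 0 < Real.sinh (k*Real.pi/2) :=
    Real.sinh_pos_iff.mpr (by positivity)
  have h2 : 0 < Real.sinh (Real.pi*k) :=
    Real.sinh_pos_iff.mpr (by positivity)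
  exact div_pos h1 h2

lemma bb_neg (hk : 0 < k) : bb k < 0 := by
  have h1 : 0 < Real.cosh (k*Real.pi/2) := Real.cosh_pos _
  have h2 : 0 < Real.sinh (Real.pi*k) :=
    Real.sinh_pos_iff.mpr (by positivity)
  simp only [bb, neg_lt, neg_zero]
  exact div_pos h1 h2

lemma contDiffOn_Gf (hc1 : 0 < c) : ContDiffOn ℝ ∞ (Gf k c) (Ioo (-c) c) :=
  (contDiffOn_const.mul (contDiffOn_Ec hc1)).add (contDiffOn_const.mul (contDiffOn_Oc hc1))

lemma Gf_iter (hc1 : 0 < c) (l : ℕ) : ∀ x ∈ Ioo (-c) c,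
    iteratedDeriv l (Gf k c) x
      = aa k * iteratedDeriv l (Ec k c) x + bb k * iteratedDeriv l (Oc k c) x :=
  iteratedDeriv_add_on isOpen_Ioo (contDiffOn_Ec hc1) (contDiffOn_Oc hc1) (aa k) (bb k) l

lemma integrand_eq (hk0 : k ≠ 0) (hc : 1 < c) {y : ℝ} (hy : y ∈ Icc (-1:ℝ) 1) :
    Real.sinh (k * Real.arccos (y/c)) / (Real.sin (Real.arccos (y/c)) * Real.sinh (Real.pi*k))
      = Gf k c y := by
  have h1 : -1 < y/c := by
    rw [lt_div_iff₀ (by linarith : (0:ℝ) < c)]; nlinarith [hy.1, hy.2]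
  have h2 : y/c < 1 := by
    rw [div_lt_iff₀ (by linarith : (0:ℝ) < c)]; nlinarith [hy.1, hy.2]
  have hq : (0:ℝ) < 1 - (y/c)^2 := by nlinarith
  have hS : 0 < Real.sqrt (1 - (y/c)^2) := Real.sqrt_pos.mpr hq
  have hsk : Real.sinh (Real.pi*k) ≠ 0 :=
    fun h => (mul_ne_zero Real.pi_ne_zero hk0) (Real.sinh_eq_zero.mp h)
  have harccos : Real.arccos (y/c) = Real.pi/2 - Real.arcsin (y/c) := by
    have := Real.arcsin_eq_pi_div_two_sub_arccos (y/c)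
    linarith
  rw [Real.sin_arccos, harccos,
    show k * (Real.pi/2 - Real.arcsin (y/c)) = k*Real.pi/2 - k * Real.arcsin (y/c) by ring,
    Real.sinh_sub]
  simp only [Gf, aa, bb, Ec, Oc, UU, VV, RRf]
  field_simp
  ring

lemma iter_Ec_neg (l : ℕ) (x : ℝ) :
    iteratedDeriv l (Ec k c) (-x) = (-1:ℝ)^l * iteratedDeriv l (Ec k c) x := by
  have h := iteratedDeriv_comp_neg l (Ec k c) x
  have he : (fun y => Ec k c (-y)) = Ec k c := funext (fun y => Ec_even y)
  rw [he, smul_eq_mul] at h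
  have key : ((-1:ℝ)^l) * ((-1:ℝ)^l) = 1 := by
    rw [← pow_add]; exact Even.neg_one_pow ⟨l, rfl⟩
  have h' := congrArg (fun t => (-1:ℝ)^l * t) h
  rw [← mul_assoc, key, one_mul] at h'
  exact h'.symm

lemma iter_Oc_neg (l : ℕ) (x : ℝ) :
    iteratedDeriv l (Oc k c) (-x) = -((-1:ℝ)^l) * iteratedDeriv l (Oc k c) x := by
  have h := iteratedDeriv_comp_neg l (Oc k c) x
  have he : (fun y => Oc k c (-y)) = fun y => -(Oc k c y) := funext (fun y => Oc_odd y)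
  rw [he] at h
  rw [iteratedDeriv_fun_neg, smul_eq_mul] at h
  have key : ((-1:ℝ)^l) * ((-1:ℝ)^l) = 1 := by
    rw [← pow_add]; exact Even.neg_one_pow ⟨l, rfl⟩
  have h' := congrArg (fun t => (-1:ℝ)^l * t) h
  rw [← mul_assoc, key, one_mul] at h'
  rw [← h']
  ring

lemma odd_integral_zero {f : ℝ → ℝ} (hodd : ∀ y, f (-y) = -f y) :
    ∫ y in (-1:ℝ)..1, f y = 0 := by
  have h := intervalIntegral.integral_comp_neg (a := (-1:ℝ)) (b := 1) f
  simp only [neg_neg] at h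
  simp_rw [hodd] at h
  rw [intervalIntegral.integral_neg] at h
  linarith

lemma wf_nonneg (l : ℕ) {y : ℝ} (hy : y ∈ Icc (-1:ℝ) 1) : 0 ≤ wf l y := by
  have h1 : (0:ℝ) ≤ 1 - y^2 := by nlinarith [hy.1, hy.2]
  have h2 : (0:ℝ) < ((l+1).factorial : ℝ) := by
    exact_mod_cast Nat.factorial_pos (l+1)
  apply mul_nonneg
  · positivity
  · positivity

lemma wf_even (l : ℕ) (y : ℝ) : wf l (-y) = wf l y := by simp [wf]

lemma int_Ec_nonneg (hk : 0 < k) (hc : 1 < c) {l : ℕ} (hl : Even l) :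
    0 ≤ ∫ y in (-1:ℝ)..1, wf l y * iteratedDeriv l (Ec k c) y := by
  apply intervalIntegral.integral_nonneg (by norm_num : (-1:ℝ) ≤ 1)
  intro u hu
  apply mul_nonneg (wf_nonneg l hu)
  rcases le_total 0 u with h | h
  · exact nonneg_iter_Ec hk (by linarith : (0:ℝ) < c) l u ⟨h, by linarith [hu.2]⟩
  · have hrw : u = -(-u) := by ring
    rw [hrw, iter_Ec_neg, hl.neg_one_pow, one_mul]
    exact nonneg_iter_Ec hk (by linarith : (0:ℝ) < c) l (-u) ⟨by linarith, by linarith [hu.1]⟩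

lemma int_Oc_nonneg (hk : 0 < k) (hc : 1 < c) {l : ℕ} (hl : Odd l) :
    0 ≤ ∫ y in (-1:ℝ)..1, wf l y * iteratedDeriv l (Oc k c) y := by
  apply intervalIntegral.integral_nonneg (by norm_num : (-1:ℝ) ≤ 1)
  intro u hu
  apply mul_nonneg (wf_nonneg l hu)
  rcases le_total 0 u with h | h
  · exact nonneg_iter_Oc hk (by linarith : (0:ℝ) < c) l u ⟨h, by linarith [hu.2]⟩
  · have hrw : u = -(-u) := by ring
    rw [hrw, iter_Oc_neg, hl.neg_one_pow]
    have := nonneg_iter_Oc hk (by linarith : (0:ℝ) < c) l (-u) ⟨by linarith, by linarith [hu.1]⟩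
    nlinarith [this]

lemma int_Oc_zero {l : ℕ} (hl : Even l) :
    ∫ y in (-1:ℝ)..1, wf l y * iteratedDeriv l (Oc k c) y = 0 := by
  apply odd_integral_zero
  intro y
  rw [wf_even, iter_Oc_neg, hl.neg_one_pow]
  ring

lemma int_Ec_zero {l : ℕ} (hl : Odd l) :
    ∫ y in (-1:ℝ)..1, wf l y * iteratedDeriv l (Ec k c) y = 0 := by
  apply odd_integral_zero
  intro y
  rw [wf_even, iter_Ec_neg, hl.neg_one_pow]
  ring

lemma contOnIcc (hc : 1 < c) {F : ℝ → ℝ} (hF : ContDiffOn ℝ ∞ F (Ioo (-c) c)) (j : ℕ) :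
    ContinuousOn (iteratedDeriv j F) (uIcc (-1:ℝ) 1) := by
  rw [uIcc_of_le (by norm_num : (-1:ℝ) ≤ 1)]
  exact ((iter_contDiffOn isOpen_Ioo j F hF).continuousOn).mono (Icc_sub_Ioo hc)

lemma int_split (hc : 1 < c) (l : ℕ) :
    ∫ y in (-1:ℝ)..1, wf l y * iteratedDeriv l (Gf k c) y
      = aa k * (∫ y in (-1:ℝ)..1, wf l y * iteratedDeriv l (Ec k c) y)
        + bb k * (∫ y in (-1:ℝ)..1, wf l y * iteratedDeriv l (Oc k c) y) := by
  have hc0 : (0:ℝ) < c := by linarith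
  have hwf : Continuous (wf l) := by
    apply Continuous.mul continuous_const
    exact (continuous_const.sub (continuous_pow 2)).pow (l+1)
  have hEcI : IntervalIntegrable (fun y => wf l y * iteratedDeriv l (Ec k c) y)
      MeasureTheory.volume (-1:ℝ) 1 :=
    (hwf.continuousOn.mul (contOnIcc hc (contDiffOn_Ec hc0) l)).intervalIntegrable
  have hOcI : IntervalIntegrable (fun y => wf l y * iteratedDeriv l (Oc k c) y)
      MeasureTheory.volume (-1:ℝ) 1 :=
    (hwf.continuousOn.mul (contOnIcc hc (contDiffOn_Oc hc0) l)).intervalIntegrable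
  have e : EqOn (fun y => wf l y * iteratedDeriv l (Gf k c) y)
      (fun y => aa k * (wf l y * iteratedDeriv l (Ec k c) y)
        + bb k * (wf l y * iteratedDeriv l (Oc k c) y)) (uIcc (-1:ℝ) 1) := by
    intro y hy
    rw [uIcc_of_le (by norm_num : (-1:ℝ) ≤ 1)] at hy
    have h := Gf_iter (k := k) hc0 l y (Icc_sub_Ioo hc hy)
    simp only []
    rw [h]
    ring
  rw [intervalIntegral.integral_congr e,
    intervalIntegral.integral_add (hEcI.const_mul _) (hOcI.const_mul _),
    intervalIntegral.integral_const_mul, intervalIntegral.integral_const_mul]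

lemma scalar_id (l : ℕ) (y : ℝ) :
    (1/(2^l * ((l.factorial : ℕ):ℝ)) * (-1:ℝ)^l) * ((y^2-1)^l)
      - (1/(2^(l+2) * (((l+2).factorial : ℕ):ℝ)) * (-1:ℝ)^l)
        * (2*((l:ℝ)+2)*(y^2-1)^(l+1) + 4*((l:ℝ)+2)*((l:ℝ)+1)*(y^2*(y^2-1)^l))
      = wf l y := by
  simp only [wf]
  have hf1 : (((l+2).factorial : ℕ):ℝ) = ((l:ℝ)+2) * ((l:ℝ)+1) * ((l.factorial : ℕ):ℝ) := by
    rw [show l+2 = (l+1)+1 from rfl, Nat.factorial_succ, Nat.factorial_succ]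
    push_cast
    ring
  have hf2 : (((l+1).factorial : ℕ):ℝ) = ((l:ℝ)+1) * ((l.factorial : ℕ):ℝ) := by
    rw [Nat.factorial_succ]; push_cast; ring
  have he : (1-y^2)^(l+1) = (-1:ℝ)^(l+1) * (y^2-1)^(l+1) := by
    rw [← mul_pow]
    congr 1
    ring
  have hfl : (0:ℝ) < ((l.factorial : ℕ):ℝ) := by exact_mod_cast Nat.factorial_pos l
  rw [hf1, hf2, he]
  have h2 : (2:ℝ)^(l+2) = 4 * 2^l := by rw [pow_succ, pow_succ]; ring
  have h21 : (2:ℝ)^(l+1) = 2 * 2^l := by rw [pow_succ]; ring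
  rw [h2, h21]
  have h2l : (0:ℝ) < 2^l := by positivity
  field_simp
  ring

lemma Tdiff (hc : 1 < c) (l : ℕ) :
    (∫ y in (-1:ℝ)..1, legendreP l y * Gf k c y)
      - (∫ y in (-1:ℝ)..1, legendreP (l+2) y * Gf k c y)
      = ∫ y in (-1:ℝ)..1, wf l y * iteratedDeriv l (Gf k c) y := by
  have hc0 : (0:ℝ) < c := by linarith
  have hG := contDiffOn_Gf (k := k) hc0
  have hGcont := contOnIcc hc hG l
  have eA : (fun y => legendreP l y * Gf k c y)
      = fun y => (1/(2^l * ((l.factorial : ℕ):ℝ))) * (iteratedDeriv l (qs l) y * Gf k c y) := by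
    funext y
    show (1 / (2 ^ l * ((l.factorial : ℕ):ℝ))) * iteratedDeriv l (qs l) y * Gf k c y = _
    ring
  have eB : (fun y => legendreP (l+2) y * Gf k c y)
      = fun y => (1/(2^(l+2) * (((l+2).factorial : ℕ):ℝ)))
          * (iteratedDeriv (l+2) (qs (l+2)) y * Gf k c y) := by
    funext y
    show (1 / (2 ^ (l+2) * (((l+2).factorial : ℕ):ℝ))) * iteratedDeriv (l+2) (qs (l+2)) y * Gf k c y = _
    ring
  rw [eA, eB, intervalIntegral.integral_const_mul, intervalIntegral.integral_const_mul,
    parts hc hG l l le_rfl, parts hc hG (l+2) l (by omega)]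
  rw [show l - l = 0 from Nat.sub_self l, show l + 2 - l = 2 by omega]
  rw [iteratedDeriv_zero, qs_second l]
  have hq2cont : Continuous (fun y : ℝ => 2*((l:ℝ)+2)*(y^2-1)^(l+1)
      + 4*((l:ℝ)+2)*((l:ℝ)+1)*(y^2*(y^2-1)^l)) := by
    continuity
  have hqscont : Continuous (qs l) := ((continuous_pow 2).sub continuous_const).pow l
  have hI1 : IntervalIntegrable (fun y => (1/(2^l * ((l.factorial : ℕ):ℝ)) * (-1:ℝ)^l)
      * (qs l y * iteratedDeriv l (Gf k c) y)) MeasureTheory.volume (-1:ℝ) 1 :=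
    ((hqscont.continuousOn.mul hGcont).intervalIntegrable).const_mul _
  have hI2 : IntervalIntegrable (fun y => (1/(2^(l+2) * (((l+2).factorial : ℕ):ℝ)) * (-1:ℝ)^l)
      * ((2*((l:ℝ)+2)*(y^2-1)^(l+1) + 4*((l:ℝ)+2)*((l:ℝ)+1)*(y^2*(y^2-1)^l))
        * iteratedDeriv l (Gf k c) y)) MeasureTheory.volume (-1:ℝ) 1 :=
    ((hq2cont.continuousOn.mul hGcont).intervalIntegrable).const_mul _
  rw [show (1/(2^l * ((l.factorial : ℕ):ℝ))) * ((-1:ℝ)^l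
      * ∫ y in (-1:ℝ)..1, qs l y * iteratedDeriv l (Gf k c) y)
    = ∫ y in (-1:ℝ)..1, (1/(2^l * ((l.factorial : ℕ):ℝ)) * (-1:ℝ)^l)
        * (qs l y * iteratedDeriv l (Gf k c) y) by
      rw [intervalIntegral.integral_const_mul]; ring]
  rw [show (1/(2^(l+2) * (((l+2).factorial : ℕ):ℝ))) * ((-1:ℝ)^l
      * ∫ y in (-1:ℝ)..1, (2*((l:ℝ)+2)*(y^2-1)^(l+1)
          + 4*((l:ℝ)+2)*((l:ℝ)+1)*(y^2*(y^2-1)^l)) * iteratedDeriv l (Gf k c) y)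
    = ∫ y in (-1:ℝ)..1, (1/(2^(l+2) * (((l+2).factorial : ℕ):ℝ)) * (-1:ℝ)^l)
        * ((2*((l:ℝ)+2)*(y^2-1)^(l+1) + 4*((l:ℝ)+2)*((l:ℝ)+1)*(y^2*(y^2-1)^l))
          * iteratedDeriv l (Gf k c) y) by
      rw [intervalIntegral.integral_const_mul]; ring]
  rw [← intervalIntegral.integral_sub hI1 hI2]
  apply intervalIntegral.integral_congr
  intro y _
  simp only []
  have := scalar_id l y
  calc (1/(2^l * ((l.factorial : ℕ):ℝ)) * (-1:ℝ)^l) * (qs l y * iteratedDeriv l (Gf k c) y)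
      - (1/(2^(l+2) * (((l+2).factorial : ℕ):ℝ)) * (-1:ℝ)^l)
        * ((2*((l:ℝ)+2)*(y^2-1)^(l+1) + 4*((l:ℝ)+2)*((l:ℝ)+1)*(y^2*(y^2-1)^l))
          * iteratedDeriv l (Gf k c) y)
      = ((1/(2^l * ((l.factorial : ℕ):ℝ)) * (-1:ℝ)^l) * ((y^2-1)^l)
        - (1/(2^(l+2) * (((l+2).factorial : ℕ):ℝ)) * (-1:ℝ)^l)
          * (2*((l:ℝ)+2)*(y^2-1)^(l+1) + 4*((l:ℝ)+2)*((l:ℝ)+1)*(y^2*(y^2-1)^l)))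
          * iteratedDeriv l (Gf k c) y := by
        show _ = _
        simp only [qs]
        ring
    _ = wf l y * iteratedDeriv l (Gf k c) y := by rw [this]

end Final

lemma Sl_negk (m : ℝ) (N l' : ℕ) (k : ℝ) : Sl m N l' (-k) = Sl m N l' k := by
  unfold Sl
  congr 1
  apply intervalIntegral.integral_congr
  intro y _
  simp only [neg_mul, Real.sinh_neg, mul_neg, neg_div_neg_eq]

/-- For `k ≠ 0`: `S_{l+2}(k) ≥ S_l(k)` for odd `l`, and `S_{l+2}(k) ≤ S_l(k)` for even `l`. -/
theorem stmt13 (m : ℝ) (hm : 0 < m) (N : ℕ) (hN : 2 ≤ N) (k : ℝ) (hk : k ≠ 0) (l : ℕ) :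
    (Odd l → Sl m N l k ≤ Sl m N (l + 2) k) ∧
    (Even l → Sl m N (l + 2) k ≤ Sl m N l k) := by
  have main : ∀ k' : ℝ, 0 < k' →
      (Odd l → Sl m N l k' ≤ Sl m N (l + 2) k') ∧
      (Even l → Sl m N (l + 2) k' ≤ Sl m N l k') := by
    intro k' hk'
    have hc : 1 < m + 1 := by linarith
    have hC : (0:ℝ) ≤ 2 * Real.pi ^ 2 * ((N : ℝ) - 1) := by
      have h2 : (2:ℝ) ≤ (N:ℝ) := by exact_mod_cast hN
      nlinarith [sq_nonneg Real.pi]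
    have hSl : ∀ j : ℕ, Sl m N j k'
        = 2 * Real.pi ^ 2 * ((N : ℝ) - 1)
          * ∫ y in (-1:ℝ)..1, legendreP j y * Gf k' (m+1) y := by
      intro j
      unfold Sl
      congr 1
      apply intervalIntegral.integral_congr
      intro y hy
      rw [uIcc_of_le (by norm_num : (-1:ℝ) ≤ 1)] at hy
      simp only []
      rw [mul_div_assoc, integrand_eq hk'.ne' hc hy]
    have hT := Tdiff (k := k') hc l
    have hspl := int_split (k := k') hc l
    constructor
    · intro hodd
      rw [hSl l, hSl (l + 2)]
      have hz := int_Ec_zero (k := k') (c := m+1) hodd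
      have hn := int_Oc_nonneg hk' hc hodd
      have hbb := bb_neg hk'
      have haa := aa_pos hk'
      have hX : (∫ y in (-1:ℝ)..1, legendreP l y * Gf k' (m+1) y)
          - (∫ y in (-1:ℝ)..1, legendreP (l+2) y * Gf k' (m+1) y) ≤ 0 := by
        rw [hT, hspl, hz]
        nlinarith
      nlinarith [mul_nonneg hC (show (0:ℝ)
        ≤ (∫ y in (-1:ℝ)..1, legendreP (l+2) y * Gf k' (m+1) y)
          - (∫ y in (-1:ℝ)..1, legendreP l y * Gf k' (m+1) y) by linarith)]
    · intro heven
      rw [hSl l, hSl (l + 2)]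
      have hz := int_Oc_zero (k := k') (c := m+1) heven
      have hn := int_Ec_nonneg hk' hc heven
      have hbb := bb_neg hk'
      have haa := aa_pos hk'
      have hX : (0:ℝ) ≤ (∫ y in (-1:ℝ)..1, legendreP l y * Gf k' (m+1) y)
          - (∫ y in (-1:ℝ)..1, legendreP (l+2) y * Gf k' (m+1) y) := by
        rw [hT, hspl, hz]
        nlinarith
      nlinarith [mul_nonneg hC (show (0:ℝ)
        ≤ (∫ y in (-1:ℝ)..1, legendreP l y * Gf k' (m+1) y)
          - (∫ y in (-1:ℝ)..1, legendreP (l+2) y * Gf k' (m+1) y) by linarith)]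
  rcases hk.lt_or_gt with hneg | hpos
  · have h := main (-k) (by linarith)
    rw [Sl_negk, Sl_negk] at h
    exact h
  · exact main k hpos
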